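/- Let I be a real-valued function on real populations that is scale-invariant (I(tP) = I(P) for every real t > 0 and every real population P), and let J be a real-valued function on real populations that is additive and positively homogeneous (J(P + Q) = J(P) + J(Q) and J(tP) = tJ(P) for t > 0). Let D be a real population with |D| = 1, and assume that for every real population Q, (I(D + tQ) − I(D))/t → J(Q) as t → 0⁺. Let Z₀ be a population with Z₀ = |Z₀|·D. Define V(X) = Avg(X) − I(X) on populations, and define f(w) = w − J(1_w) − Avg(D), where 1_w is the population with a single welfare subject at level w. Then for all populations X and Y with Σ_w X(w)·f(w) > Σ_w Y(w)·f(w), there exists N ∈ ℕ such that V(X + n·Z₀) > V(Y + n·Z₀) for every integer n ≥ N. -/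

import Mathlib

/-- The size of a population: total number of welfare subjects. -/
noncomputable def psize (X : ℝ →₀ ℕ) : ℕ := X.sum fun _ n => n

/-- Total welfare of a population. -/
noncomputable def ptot (X : ℝ →₀ ℕ) : ℝ := X.sum fun w n => (n : ℝ) * w

/-- Average welfare of a population. -/
noncomputable def pavg (X : ℝ →₀ ℕ) : ℝ := ptot X / (psize X : ℝ)

/-- A real population: finitely supported, nonzero, with non-negative real values. -/
def IsRealPop (P : ℝ →₀ ℝ) : Prop := P ≠ 0 ∧ ∀ w, 0 ≤ P w

/-- View an (integer) population as a real population. -/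
noncomputable def toRealPop (X : ℝ →₀ ℕ) : ℝ →₀ ℝ :=
  Finsupp.mapRange (fun n : ℕ => (n : ℝ)) (by simp) X

/-- Size of a real population. -/
noncomputable def rsize (P : ℝ →₀ ℝ) : ℝ := P.sum fun _ x => x

/-- Total welfare of a real population. -/
noncomputable def rtot (P : ℝ →₀ ℝ) : ℝ := P.sum fun w x => x * w

/-- Average welfare of a real population. -/
noncomputable def ravg (P : ℝ →₀ ℝ) : ℝ := rtot P / rsize P

lemma toRealPop_apply (X : ℝ →₀ ℕ) (w : ℝ) : toRealPop X w = (X w : ℝ) :=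
  Finsupp.mapRange_apply

lemma toRealPop_add (X Y : ℝ →₀ ℕ) :
    toRealPop (X + Y) = toRealPop X + toRealPop Y := by
  ext w; simp [toRealPop_apply]

lemma toRealPop_nsmul (n : ℕ) (X : ℝ →₀ ℕ) :
    toRealPop (n • X) = (n : ℝ) • toRealPop X := by
  ext w; simp [toRealPop_apply]

lemma isRealPop_toRealPop (X : ℝ →₀ ℕ) (hX : X ≠ 0) : IsRealPop (toRealPop X) := by
  constructor
  · intro h
    apply hX
    ext w
    have := congrArg (fun P : ℝ →₀ ℝ => P w) h
    simpa [toRealPop_apply] using this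
  · intro w; simp [toRealPop_apply]

lemma isRealPop_add_right (P Q : ℝ →₀ ℝ) (hP : IsRealPop P) (hQ : ∀ w, 0 ≤ Q w) :
    IsRealPop (P + Q) := by
  constructor
  · intro h
    apply hP.1
    ext w
    have hw := congrArg (fun R : ℝ →₀ ℝ => R w) h
    simp only [Finsupp.add_apply, Finsupp.coe_zero, Pi.zero_apply] at hw
    have := hP.2 w
    have := hQ w
    simp only [Finsupp.coe_zero, Pi.zero_apply]
    linarith
  · intro w
    simp only [Finsupp.add_apply]
    exact add_nonneg (hP.2 w) (hQ w)

lemma isRealPop_smul (t : ℝ) (ht : 0 < t) (P : ℝ →₀ ℝ) (hP : IsRealPop P) :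
    IsRealPop (t • P) := by
  constructor
  · intro h
    apply hP.1
    ext w
    have hw := congrArg (fun R : ℝ →₀ ℝ => R w) h
    simp only [Finsupp.smul_apply, smul_eq_mul, Finsupp.coe_zero, Pi.zero_apply] at hw ⊢
    exact (mul_eq_zero.mp hw).resolve_left (ne_of_gt ht)
  · intro w
    simp only [Finsupp.smul_apply, smul_eq_mul]
    exact mul_nonneg ht.le (hP.2 w)

lemma rtot_toRealPop (X : ℝ →₀ ℕ) : rtot (toRealPop X) = ptot X := by
  unfold rtot ptot toRealPop
  exact Finsupp.sum_mapRange_index (fun w => by simp)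

lemma rsize_toRealPop (X : ℝ →₀ ℕ) : rsize (toRealPop X) = (psize X : ℝ) := by
  unfold rsize psize toRealPop
  rw [Finsupp.sum_mapRange_index (fun w => by simp)]
  simp [Finsupp.sum, Nat.cast_sum]

lemma rtot_add (P Q : ℝ →₀ ℝ) : rtot (P + Q) = rtot P + rtot Q := by
  unfold rtot
  exact Finsupp.sum_add_index' (fun w => by simp) (fun w a b => add_mul a b w)

lemma rsize_add (P Q : ℝ →₀ ℝ) : rsize (P + Q) = rsize P + rsize Q := by
  unfold rsize
  exact Finsupp.sum_add_index' (fun w => rfl) (fun w a b => rfl)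

lemma rtot_smul (c : ℝ) (P : ℝ →₀ ℝ) : rtot (c • P) = c * rtot P := by
  unfold rtot
  rw [Finsupp.sum_smul_index (fun w => zero_mul w)]
  rw [Finsupp.mul_sum]
  exact Finsupp.sum_congr fun w _ => by simp [mul_assoc]

lemma rsize_smul (c : ℝ) (P : ℝ →₀ ℝ) : rsize (c • P) = c * rsize P := by
  unfold rsize
  rw [Finsupp.sum_smul_index (fun w => rfl)]
  rw [Finsupp.mul_sum]

lemma psize_pos (X : ℝ →₀ ℕ) (hX : X ≠ 0) : 0 < psize X := by
  rcases Finsupp.ne_iff.mp hX with ⟨w, hw⟩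
  simp only [Finsupp.coe_zero, Pi.zero_apply] at hw
  have hmem : w ∈ X.support := Finsupp.mem_support_iff.mpr hw
  unfold psize
  exact Finset.sum_pos' (fun i _ => Nat.zero_le _) ⟨w, hmem, Nat.pos_of_ne_zero hw⟩

lemma single_realPop (w : ℝ) : IsRealPop (Finsupp.single w (1 : ℝ)) := by
  refine ⟨fun h => one_ne_zero (Finsupp.single_eq_zero.mp h), fun v => ?_⟩
  rw [Finsupp.single_apply]
  split_ifs <;> norm_num

lemma J_sum (J : (ℝ →₀ ℝ) → ℝ)
    (hJadd : ∀ P Q : ℝ →₀ ℝ, IsRealPop P → IsRealPop Q → J (P + Q) = J P + J Q)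
    (hJhom : ∀ t : ℝ, t > 0 → ∀ P : ℝ →₀ ℝ, IsRealPop P → J (t • P) = t * J P) :
    ∀ X : ℝ →₀ ℕ, X ≠ 0 →
      J (toRealPop X) = X.sum fun w n => (n : ℝ) * J (Finsupp.single w (1 : ℝ)) := by
  intro X
  induction X using Finsupp.induction with
  | zero => intro h; exact absurd rfl h
  | single_add a b g ha hb ih =>
    intro _
    have hsingle : toRealPop (Finsupp.single a b) = (b : ℝ) • Finsupp.single a (1 : ℝ) := by
      ext w
      simp only [toRealPop_apply, Finsupp.single_apply, Finsupp.smul_apply, smul_eq_mul]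
      split_ifs <;> simp
    have hbpos : (0 : ℝ) < (b : ℝ) := by exact_mod_cast Nat.pos_of_ne_zero hb
    have hJsingle : J (toRealPop (Finsupp.single a b)) = (b : ℝ) * J (Finsupp.single a (1 : ℝ)) := by
      rw [hsingle, hJhom _ hbpos _ (single_realPop a)]
    have hsum : (Finsupp.single a b + g).sum (fun w n => (n : ℝ) * J (Finsupp.single w (1 : ℝ)))
        = (b : ℝ) * J (Finsupp.single a (1 : ℝ))
          + g.sum (fun w n => (n : ℝ) * J (Finsupp.single w (1 : ℝ))) := by
      rw [Finsupp.sum_add_index' (fun w => by simp) (fun w m n => by push_cast; ring)]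
      congr 1
      exact Finsupp.sum_single_index (by simp)
    rw [hsum]
    by_cases hg : g = 0
    · subst hg
      simp only [add_zero, Finsupp.sum_zero_index]
      rw [hJsingle]
    · rw [toRealPop_add, hJadd _ _ (isRealPop_toRealPop _ (fun h => hb (Finsupp.single_eq_zero.mp h)))
        (isRealPop_toRealPop _ hg), hJsingle, ih hg]

open Filter Topology
lemma rat_lim (k s C : ℝ) (hk : 0 < k) (hs : 0 ≤ s) :
    Tendsto (fun n : ℕ => (n : ℝ) * k * C / (s + (n : ℝ) * k)) atTop (nhds C) := by
  have h1 : Tendsto (fun n : ℕ => s + (n : ℝ) * k) atTop atTop := by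
    apply tendsto_atTop_add_const_left
    exact Tendsto.atTop_mul_const hk tendsto_natCast_atTop_atTop
  have h2 : Tendsto (fun n : ℕ => s / (s + (n : ℝ) * k)) atTop (nhds 0) := by
    have := (tendsto_inv_atTop_zero.comp h1).const_mul s
    simpa [div_eq_mul_inv] using this
  have h3 : Tendsto (fun n : ℕ => C * (1 - s / (s + (n : ℝ) * k))) atTop (nhds C) := by
    have := (tendsto_const_nhds (x := (1:ℝ)) (f := atTop (α := ℕ))).sub h2
    simpa using this.const_mul C
  apply h3.congr'
  filter_upwards [eventually_ge_atTop 1] with n hn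
  have hnk : 0 < (n : ℝ) * k := by
    apply mul_pos _ hk
    exact_mod_cast Nat.pos_of_ne_zero (by omega)
  have hden : s + (n : ℝ) * k ≠ 0 := by positivity
  field_simp
  ring

theorem stmt_9 (I J : (ℝ →₀ ℝ) → ℝ)
    (hIscale : ∀ t : ℝ, t > 0 → ∀ P : ℝ →₀ ℝ, IsRealPop P → I (t • P) = I P)
    (hJadd : ∀ P Q : ℝ →₀ ℝ, IsRealPop P → IsRealPop Q → J (P + Q) = J P + J Q)
    (hJhom : ∀ t : ℝ, t > 0 → ∀ P : ℝ →₀ ℝ, IsRealPop P → J (t • P) = t * J P)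
    (D : ℝ →₀ ℝ) (hD : IsRealPop D) (hDsize : rsize D = 1)
    (hderiv : ∀ Q : ℝ →₀ ℝ, IsRealPop Q →
      Filter.Tendsto (fun t : ℝ => (I (D + t • Q) - I D) / t)
        (nhdsWithin 0 (Set.Ioi 0)) (nhds (J Q)))
    (Z₀ : ℝ →₀ ℕ) (hZ₀ : Z₀ ≠ 0) (hZ₀D : toRealPop Z₀ = (psize Z₀ : ℝ) • D)
    (V : (ℝ →₀ ℕ) → ℝ)
    (hV : ∀ X : ℝ →₀ ℕ, V X = pavg X - I (toRealPop X))
    (f : ℝ → ℝ)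
    (hf : ∀ w : ℝ, f w = w - J (Finsupp.single w (1 : ℝ)) - ravg D)
    (X Y : ℝ →₀ ℕ) (hX : X ≠ 0) (hY : Y ≠ 0)
    (hfsum : X.sum (fun w n => (n : ℝ) * f w) > Y.sum (fun w n => (n : ℝ) * f w)) :
    ∃ N : ℕ, ∀ n : ℕ, n ≥ N → V (X + n • Z₀) > V (Y + n • Z₀) := by
  classical
  set QX := toRealPop X with hQXdef
  set QY := toRealPop Y with hQYdef
  have hQX := isRealPop_toRealPop X hX
  have hQY := isRealPop_toRealPop Y hY
  set k : ℝ := (psize Z₀ : ℝ) with hkdef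
  have hk : 0 < k := by rw [hkdef]; exact_mod_cast psize_pos Z₀ hZ₀
  set A : ℝ := rtot D with hAdef
  have hAvgD : ravg D = A := by rw [ravg, hDsize, div_one]
  set sX : ℝ := rsize QX with hsXdef
  set sY : ℝ := rsize QY with hsYdef
  have hsX : 0 < sX := by
    rw [hsXdef, hQXdef, rsize_toRealPop]
    exact_mod_cast psize_pos X hX
  have hsY : 0 < sY := by
    rw [hsYdef, hQYdef, rsize_toRealPop]
    exact_mod_cast psize_pos Y hY
  set c : ℕ → ℝ := fun n => (n : ℝ) * k with hcdef
  set φX : ℕ → ℝ := fun n => (I (D + (c n)⁻¹ • QX) - I D) / (c n)⁻¹ with hφXdef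
  set φY : ℕ → ℝ := fun n => (I (D + (c n)⁻¹ • QY) - I D) / (c n)⁻¹ with hφYdef
  -- key expansion of V
  have hexp : ∀ (W : ℝ →₀ ℕ), W ≠ 0 → ∀ n : ℕ, 1 ≤ n →
      V (W + n • Z₀) = (rtot (toRealPop W) + c n * A) / (rsize (toRealPop W) + c n)
        - (I D + (c n)⁻¹ * ((I (D + (c n)⁻¹ • toRealPop W) - I D) / (c n)⁻¹)) := by
    intro W hW n hn
    have hcn : 0 < c n := by
      apply mul_pos _ hk
      exact_mod_cast hn
    have htn : 0 < (c n)⁻¹ := inv_pos.mpr hcn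
    have hWn : toRealPop (W + n • Z₀) = toRealPop W + c n • D := by
      rw [toRealPop_add, toRealPop_nsmul, hZ₀D, smul_smul]
    have hpavg : pavg (W + n • Z₀)
        = (rtot (toRealPop W) + c n * A) / (rsize (toRealPop W) + c n) := by
      rw [pavg, ← rtot_toRealPop, ← rsize_toRealPop, hWn, rtot_add, rtot_smul,
        rsize_add, rsize_smul, hDsize, mul_one, ← hAdef]
    have hRP : IsRealPop (D + (c n)⁻¹ • toRealPop W) := by
      apply isRealPop_add_right D _ hD
      intro w
      have := (isRealPop_toRealPop W hW).2 w
      simp only [Finsupp.smul_apply, smul_eq_mul]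
      positivity
    have hscale : c n • (D + (c n)⁻¹ • toRealPop W) = toRealPop W + c n • D := by
      rw [smul_add, smul_smul, mul_inv_cancel₀ (ne_of_gt hcn), one_smul, add_comm]
    have hI : I (toRealPop (W + n • Z₀)) = I (D + (c n)⁻¹ • toRealPop W) := by
      rw [hWn, ← hscale, hIscale (c n) hcn _ hRP]
    have hIval : I (D + (c n)⁻¹ • toRealPop W)
        = I D + (c n)⁻¹ * ((I (D + (c n)⁻¹ • toRealPop W) - I D) / (c n)⁻¹) := by
      field_simp
      ring
    rw [hV, hpavg, hI, ← hIval]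
  -- limits of φX, φY
  have htlim : Tendsto (fun n : ℕ => (c n)⁻¹) atTop (nhdsWithin 0 (Set.Ioi 0)) := by
    rw [tendsto_nhdsWithin_iff]
    constructor
    · apply tendsto_inv_atTop_zero.comp
      exact Tendsto.atTop_mul_const hk tendsto_natCast_atTop_atTop
    · filter_upwards [eventually_ge_atTop 1] with n hn
      have hcn : 0 < c n := by
        apply mul_pos _ hk
        exact_mod_cast hn
      exact Set.mem_Ioi.mpr (inv_pos.mpr hcn)
  have hφXlim : Tendsto φX atTop (nhds (J QX)) := (hderiv QX hQX).comp htlim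
  have hφYlim : Tendsto φY atTop (nhds (J QY)) := (hderiv QY hQY).comp htlim
  -- limit of H
  set H : ℕ → ℝ := fun n => c n * (V (X + n • Z₀) - V (Y + n • Z₀)) with hHdef
  set L : ℝ := (rtot QX - sX * A) - (rtot QY - sY * A) - J QX + J QY with hLdef
  have hHlim : Tendsto H atTop (nhds L) := by
    have hmain : Tendsto (fun n : ℕ =>
        (n : ℝ) * k * (rtot QX - sX * A) / (sX + (n : ℝ) * k)
        - (n : ℝ) * k * (rtot QY - sY * A) / (sY + (n : ℝ) * k)
        - φX n + φY n) atTop (nhds L) := by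
      rw [hLdef]
      exact (((rat_lim k sX (rtot QX - sX * A) hk hsX.le).sub
        (rat_lim k sY (rtot QY - sY * A) hk hsY.le)).sub hφXlim).add hφYlim
    apply hmain.congr'
    filter_upwards [eventually_ge_atTop 1] with n hn
    have hcn : 0 < c n := by
      apply mul_pos _ hk
      exact_mod_cast hn
    have htn : (c n)⁻¹ ≠ 0 := ne_of_gt (inv_pos.mpr hcn)
    have hdX : sX + c n ≠ 0 := by positivity
    have hdY : sY + c n ≠ 0 := by positivity
    rw [hHdef]
    simp only
    rw [hexp X hX n hn, hexp Y hY n hn]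
    rw [hφXdef, hφYdef]
    simp only [← hQXdef, ← hQYdef, ← hsXdef, ← hsYdef]
    have hcn' : c n = (n : ℝ) * k := rfl
    rw [← hcn']
    field_simp
    ring
  -- L > 0
  have hsum : ∀ (W : ℝ →₀ ℕ), W ≠ 0 →
      W.sum (fun w n => (n : ℝ) * f w)
        = rtot (toRealPop W) - rsize (toRealPop W) * A - J (toRealPop W) := by
    intro W hW
    have hsplit : ∀ w : ℝ, ∀ n : ℕ, (n : ℝ) * f w
        = (n : ℝ) * w - (n : ℝ) * J (Finsupp.single w (1 : ℝ)) - (n : ℝ) * A := by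
      intro w n
      rw [hf, hAvgD]
      ring
    calc W.sum (fun w n => (n : ℝ) * f w)
        = ∑ w ∈ W.support, ((W w : ℝ) * w - (W w : ℝ) * J (Finsupp.single w (1 : ℝ))
            - (W w : ℝ) * A) := by
          rw [Finsupp.sum]
          exact Finset.sum_congr rfl fun w _ => hsplit w (W w)
      _ = (∑ w ∈ W.support, (W w : ℝ) * w)
            - (∑ w ∈ W.support, (W w : ℝ) * J (Finsupp.single w (1 : ℝ)))
            - (∑ w ∈ W.support, (W w : ℝ) * A) := by
          rw [Finset.sum_sub_distrib, Finset.sum_sub_distrib]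
      _ = rtot (toRealPop W) - rsize (toRealPop W) * A - J (toRealPop W) := by
          rw [rtot_toRealPop, rsize_toRealPop,
            J_sum J hJadd hJhom W hW]
          have h1 : (∑ w ∈ W.support, (W w : ℝ) * w) = ptot W := rfl
          have h2 : (∑ w ∈ W.support, (W w : ℝ) * J (Finsupp.single w (1 : ℝ)))
              = W.sum fun w n => (n : ℝ) * J (Finsupp.single w (1 : ℝ)) := rfl
          have h3 : (∑ w ∈ W.support, (W w : ℝ) * A) = (psize W : ℝ) * A := by
            rw [← Finset.sum_mul]
            congr 1
            rw [psize, Finsupp.sum, Nat.cast_sum]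
          rw [h1, h2, h3]
          ring
  have hLpos : 0 < L := by
    have hx := hsum X hX
    have hy := hsum Y hY
    rw [hLdef]
    rw [← hQXdef] at hx
    rw [← hQYdef] at hy
    rw [← hsXdef] at hx
    rw [← hsYdef] at hy
    have : Y.sum (fun w n => (n : ℝ) * f w) < X.sum (fun w n => (n : ℝ) * f w) := hfsum
    linarith [hx, hy]
  -- conclude
  have hev : ∀ᶠ n in atTop, 0 < H n := hHlim.eventually (eventually_gt_nhds hLpos)
  rcases eventually_atTop.mp hev with ⟨N₀, hN₀⟩
  refine ⟨max N₀ 1, fun n hn => ?_⟩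
  have hn1 : 1 ≤ n := le_trans (le_max_right N₀ 1) hn
  have hHn : 0 < H n := hN₀ n (le_trans (le_max_left N₀ 1) hn)
  have hcn : 0 < c n := by
    apply mul_pos _ hk
    exact_mod_cast hn1
  have : 0 < c n * (V (X + n • Z₀) - V (Y + n • Z₀)) := hHn
  nlinarith [this, hcn]
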